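/- Conversely, under the hypotheses of the verification inequality, if in addition a control u*(·) with trajectory x*(·) achieves equality V_t(t, x*(t)) + L(t, x*(t), u*(t)) + ⟨∇_x V(t, x*(t)), f(t, x*(t), u*(t))⟩ = 0 for all t, then V(t₀, x₀) = ∫_{t₀}^{t_f} L(t, x*(t), u*(t)) dt + ψ(x*(t_f)), i.e. u* is optimal and V is the value function at (t₀, x₀). -/

import Mathlib

open scoped RealInnerProductSpace

/-- Optimality via equality in the verification argument: under the hypotheses
of the verification inequality, if a control `u*(·)` with trajectory `x*(·)`
achieves pointwise equality
`V_t + L(t, x*, u*) + ⟨∇ₓV(t, x*), f(t, x*, u*)⟩ = 0`, then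
`V(t₀, x₀) = ∫ L(t, x*(t), u*(t)) dt + ψ(x*(t_f))`, i.e. `u*` is optimal. -/
theorem hjb_verification_equality {n m : ℕ}
    (t₀ tf : ℝ) (ht : t₀ ≤ tf)
    (U : Set (EuclideanSpace ℝ (Fin m)))
    (L : ℝ → EuclideanSpace ℝ (Fin n) → EuclideanSpace ℝ (Fin m) → ℝ)
    (hL : Continuous fun q : ℝ × EuclideanSpace ℝ (Fin n) × EuclideanSpace ℝ (Fin m) =>
      L q.1 q.2.1 q.2.2)
    (f : ℝ → EuclideanSpace ℝ (Fin n) → EuclideanSpace ℝ (Fin m) →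
      EuclideanSpace ℝ (Fin n))
    (hf : Continuous fun q : ℝ × EuclideanSpace ℝ (Fin n) × EuclideanSpace ℝ (Fin m) =>
      f q.1 q.2.1 q.2.2)
    (ψ : EuclideanSpace ℝ (Fin n) → ℝ)
    (V : ℝ × EuclideanSpace ℝ (Fin n) → ℝ) (hV : ContDiff ℝ 1 V)
    (hVtf : ∀ x, V (tf, x) = ψ x)
    (hHJB : ∀ (t : ℝ) (x : EuclideanSpace ℝ (Fin n)), ∀ u ∈ U,
      0 ≤ deriv (fun s => V (s, x)) t + L t x u +
        ⟪gradient (fun y => V (t, y)) x, f t x u⟫)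
    (ustar : ℝ → EuclideanSpace ℝ (Fin m)) (hu : Continuous ustar)
    (huU : ∀ t ∈ Set.Icc t₀ tf, ustar t ∈ U)
    (x₀ : EuclideanSpace ℝ (Fin n))
    (xstar : ℝ → EuclideanSpace ℝ (Fin n)) (hx₀ : xstar t₀ = x₀)
    (hx : ∀ t ∈ Set.Icc t₀ tf, HasDerivAt xstar (f t (xstar t) (ustar t)) t)
    (hxc : Continuous xstar)
    (heq : ∀ t ∈ Set.Icc t₀ tf,
      deriv (fun s => V (s, xstar t)) t + L t (xstar t) (ustar t) +
        ⟪gradient (fun y => V (t, y)) (xstar t), f t (xstar t) (ustar t)⟫ = 0) :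
    V (t₀, x₀) = (∫ t in t₀..tf, L t (xstar t) (ustar t)) + ψ (xstar tf) := by
  -- derivative of t ↦ V (t, xstar t)
  have key : ∀ t ∈ Set.Icc t₀ tf,
      HasDerivAt (fun s => V (s, xstar s)) (-(L t (xstar t) (ustar t))) t := by
    intro t htmem
    have hVd : HasFDerivAt V (fderiv ℝ V (t, xstar t)) (t, xstar t) :=
      ((hV.differentiable one_ne_zero) (t, xstar t)).hasFDerivAt
    have hcurve : HasDerivAt (fun s => (s, xstar s)) ((1 : ℝ), f t (xstar t) (ustar t)) t :=
      (hasDerivAt_id t).prodMk (hx t htmem)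
    have hcomp := hVd.comp_hasDerivAt t hcurve
    -- partial in t
    have h1 : HasDerivAt (fun s => V (s, xstar t)) (fderiv ℝ V (t, xstar t) (1, 0)) t := by
      have hc : HasDerivAt (fun s : ℝ => (s, xstar t)) ((1 : ℝ), (0 : EuclideanSpace ℝ (Fin n))) t :=
        (hasDerivAt_id t).prodMk (hasDerivAt_const t (xstar t))
      exact hVd.comp_hasDerivAt t hc
    -- partial in x
    have h2 : HasFDerivAt (fun y => V (t, y))
        ((fderiv ℝ V (t, xstar t)).comp (ContinuousLinearMap.inr ℝ ℝ (EuclideanSpace ℝ (Fin n)))) (xstar t) := by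
      exact hVd.comp (xstar t) (hasFDerivAt_prodMk_right t (xstar t))
    have hgrad : ⟪gradient (fun y => V (t, y)) (xstar t), f t (xstar t) (ustar t)⟫
        = fderiv ℝ V (t, xstar t) (0, f t (xstar t) (ustar t)) := by
      rw [gradient, h2.fderiv]
      exact InnerProductSpace.toDual_symm_apply
    have hsplit : fderiv ℝ V (t, xstar t) ((1 : ℝ), f t (xstar t) (ustar t))
        = fderiv ℝ V (t, xstar t) (1, 0) + fderiv ℝ V (t, xstar t) (0, f t (xstar t) (ustar t)) := by
      rw [← map_add]
      norm_num [Prod.ext_iff]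
    have hval : fderiv ℝ V (t, xstar t) ((1 : ℝ), f t (xstar t) (ustar t))
        = -(L t (xstar t) (ustar t)) := by
      have := heq t htmem
      rw [h1.deriv] at this
      rw [hsplit, ← hgrad]
      linarith
    rwa [hval] at hcomp
  -- continuity of the running cost along the trajectory
  have hLc : Continuous fun t => L t (xstar t) (ustar t) := by
    exact hL.comp (continuous_id.prodMk (hxc.prodMk hu))
  have hint : IntervalIntegrable (fun t => -(L t (xstar t) (ustar t)))
      MeasureTheory.volume t₀ tf := (hLc.neg).intervalIntegrable _ _
  have hFTC : ∫ t in t₀..tf, -(L t (xstar t) (ustar t))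
      = V (tf, xstar tf) - V (t₀, xstar t₀) := by
    refine intervalIntegral.integral_eq_sub_of_hasDerivAt
      (f := fun s => V (s, xstar s)) ?_ hint
    rw [Set.uIcc_of_le ht]; exact key
  rw [intervalIntegral.integral_neg] at hFTC
  rw [hx₀, hVtf] at hFTC
  linarith
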